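/- Let A, B ∈ M_n(ℂ) and define A₂(t) := exp(−itA/2) · ( (1/2)(exp(−itB) A exp(itB) − A) + exp(−itB)(exp(−itA/2) B exp(itA/2) − B) exp(itB) ) · exp(itA/2). Define Ω₂ := −(1/8)( ad_A²(B) − 2 ad_B²(A) ), Ω₃ := (i/12)( ad_A³(B) + (3/2) ad_B(ad_A²(B)) − 2 ad_B³(A) − (3/2) ad_A(ad_B²(A)) ), and Ω₄ := (1/16)( (11/24) ad_A⁴(B) − ad_B⁴(A) − (4/3) ad_A(ad_B³(A)) − (1/2) ad_A²(ad_B²(A)) + ad_B²(ad_A²(B)) + (1/3) ad_B(ad_A³(B)) + ad_A(ad_B(ad_A²(B))) ). There exists a constant C ≥ 0 such that for all t ∈ [0,1], ‖ A₂(t) − t²Ω₂ − t³Ω₃ − t⁴Ω₄ ‖ ≤ C t⁵. -/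

import Mathlib

open scoped Matrix.Norms.L2Operator
open Matrix

/-- `ad_X(Y) := [X,Y] = XY - YX`. -/
noncomputable def ad {n : ℕ} (X Y : Matrix (Fin n) (Fin n) ℂ) :
    Matrix (Fin n) (Fin n) ℂ :=
  X * Y - Y * X

/-- The exact error Hamiltonian of the second-order (Strang) splitting. -/
noncomputable def A2 {n : ℕ} (A B : Matrix (Fin n) (Fin n) ℂ) (t : ℝ) :
    Matrix (Fin n) (Fin n) ℂ :=
  NormedSpace.exp ((-(Complex.I * (t : ℂ) / 2)) • A) *
    ((1 / 2 : ℂ) •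
        (NormedSpace.exp ((-(Complex.I * (t : ℂ))) • B) * A *
            NormedSpace.exp ((Complex.I * (t : ℂ)) • B) - A) +
      NormedSpace.exp ((-(Complex.I * (t : ℂ))) • B) *
        (NormedSpace.exp ((-(Complex.I * (t : ℂ) / 2)) • A) * B *
            NormedSpace.exp ((Complex.I * (t : ℂ) / 2) • A) - B) *
        NormedSpace.exp ((Complex.I * (t : ℂ)) • B)) *
    NormedSpace.exp ((Complex.I * (t : ℂ) / 2) • A)

set_option linter.unusedSectionVars false
set_option maxHeartbeats 1000000


variable {𝔸 : Type*} [NormedRing 𝔸] [NormedAlgebra ℂ 𝔸] [CompleteSpace 𝔸]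

lemma st16_exp_remainder (M : 𝔸) :
    ‖NormedSpace.exp M - ∑ k ∈ Finset.range 5, ((k.factorial : ℂ))⁻¹ • M ^ k‖
      ≤ ‖M‖ ^ 5 * Real.exp ‖M‖ := by
  set f : ℕ → 𝔸 := fun k => ((k.factorial : ℂ))⁻¹ • M ^ k with hf
  have h : HasSum f (NormedSpace.exp M) := NormedSpace.exp_series_hasSum_exp' (𝕂 := ℂ) M
  have hs : Summable f := h.summable
  have hnorm : Summable fun k => ‖f k‖ := NormedSpace.norm_expSeries_summable' (𝕂 := ℂ) M
  have hnorm5 : Summable fun k => ‖f (k + 5)‖ := (summable_nat_add_iff 5).2 hnorm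
  have key : NormedSpace.exp M - ∑ k ∈ Finset.range 5, f k = ∑' k, f (k + 5) := by
    have h2 := Summable.sum_add_tsum_nat_add' (f := f) (k := 5) ((summable_nat_add_iff 5).2 hs)
    rw [← h.tsum_eq, ← h2]; abel
  rw [key]
  have hterm : ∀ k : ℕ, ‖f (k + 5)‖ ≤ ‖M‖ ^ 5 * (‖M‖ ^ k / k.factorial) := by
    intro k
    have h1 : ‖f (k + 5)‖ ≤ (((k + 5).factorial : ℝ))⁻¹ * ‖M‖ ^ (k + 5) := by
      rw [hf, norm_smul]
      gcongr
      · simp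
      · exact norm_pow_le' M (Nat.succ_le_of_lt (Nat.pos_of_ne_zero (by omega)))
    refine h1.trans ?_
    rw [pow_add]
    have hfac : ((k.factorial : ℝ))⁻¹ ≥ (((k + 5).factorial : ℝ))⁻¹ := by
      apply inv_anti₀
      · positivity
      · exact_mod_cast Nat.factorial_le (by omega)
    calc (((k + 5).factorial : ℝ))⁻¹ * (‖M‖ ^ k * ‖M‖ ^ 5)
        ≤ ((k.factorial : ℝ))⁻¹ * (‖M‖ ^ k * ‖M‖ ^ 5) := by
          apply mul_le_mul_of_nonneg_right hfac; positivity
      _ = ‖M‖ ^ 5 * (‖M‖ ^ k / k.factorial) := by ring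
  have hsum2 : Summable fun k : ℕ => ‖M‖ ^ 5 * (‖M‖ ^ k / k.factorial) :=
    (Real.summable_pow_div_factorial ‖M‖).mul_left _
  calc ‖∑' k, f (k + 5)‖ ≤ ∑' k, ‖f (k + 5)‖ := norm_tsum_le_tsum_norm hnorm5
    _ ≤ ∑' k : ℕ, ‖M‖ ^ 5 * (‖M‖ ^ k / k.factorial) := Summable.tsum_le_tsum hterm hnorm5 hsum2
    _ = ‖M‖ ^ 5 * ∑' k : ℕ, (‖M‖ ^ k / k.factorial) := tsum_mul_left
    _ = ‖M‖ ^ 5 * Real.exp ‖M‖ := by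
        rw [Real.exp_eq_exp_ℝ, NormedSpace.exp_eq_tsum_div]

/-- Evaluation of a 4-jet. -/
noncomputable def st16ev (J : ℕ → 𝔸) (t : ℝ) : 𝔸 :=
  ∑ k ∈ Finset.range 5, ((t : ℂ)) ^ k • J k

/-- `f` is approximated by the jet `J` to order `t⁵` on `[0,1]`. -/
def st16Approx (f : ℝ → 𝔸) (J : ℕ → 𝔸) : Prop :=
  ∃ K : ℝ, 0 ≤ K ∧ ∀ t ∈ Set.Icc (0:ℝ) 1, ‖f t - st16ev J t‖ ≤ K * t ^ 5

/-- truncated convolution of jets -/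
noncomputable def st16conv (J J' : ℕ → 𝔸) : ℕ → 𝔸 :=
  fun k => ∑ i ∈ Finset.range (k + 1), J i * J' (k - i)

lemma st16_tpow_le {t : ℝ} (ht : t ∈ Set.Icc (0:ℝ) 1) {k : ℕ} (hk : 5 ≤ k) :
    t ^ k ≤ t ^ 5 :=
  pow_le_pow_of_le_one ht.1 ht.2 hk

lemma st16ev_norm_le (J : ℕ → 𝔸) {t : ℝ} (ht : t ∈ Set.Icc (0:ℝ) 1) :
    ‖st16ev J t‖ ≤ ∑ k ∈ Finset.range 5, ‖J k‖ := by
  refine (norm_sum_le _ _).trans (Finset.sum_le_sum fun k _ => ?_)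
  rw [norm_smul, norm_pow, Complex.norm_real, Real.norm_eq_abs, abs_of_nonneg ht.1]
  calc t ^ k * ‖J k‖ ≤ 1 * ‖J k‖ := by
        apply mul_le_mul_of_nonneg_right (pow_le_one₀ ht.1 ht.2) (norm_nonneg _)
    _ = ‖J k‖ := one_mul _

lemma st16Approx.norm_le {f : ℝ → 𝔸} {J : ℕ → 𝔸} (h : st16Approx f J) :
    ∃ Kf : ℝ, 0 ≤ Kf ∧ ∀ t ∈ Set.Icc (0:ℝ) 1, ‖f t‖ ≤ Kf := by
  obtain ⟨K, hK, hb⟩ := h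
  refine ⟨K + ∑ k ∈ Finset.range 5, ‖J k‖, by positivity, fun t ht => ?_⟩
  calc ‖f t‖ ≤ ‖f t - st16ev J t‖ + ‖st16ev J t‖ := by
        simpa using norm_add_le (f t - st16ev J t) (st16ev J t)
    _ ≤ K * t ^ 5 + ∑ k ∈ Finset.range 5, ‖J k‖ :=
        add_le_add (hb t ht) (st16ev_norm_le J ht)
    _ ≤ K + ∑ k ∈ Finset.range 5, ‖J k‖ := by
        have : K * t ^ 5 ≤ K * 1 := by
          apply mul_le_mul_of_nonneg_left _ hK
          exact pow_le_one₀ ht.1 ht.2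
        linarith

lemma st16Approx.add {f g : ℝ → 𝔸} {J J' : ℕ → 𝔸} (hf : st16Approx f J)
    (hg : st16Approx g J') : st16Approx (fun t => f t + g t) (fun k => J k + J' k) := by
  obtain ⟨K, hK, hb⟩ := hf; obtain ⟨L, hL, hb'⟩ := hg
  refine ⟨K + L, by positivity, fun t ht => ?_⟩
  have hev : st16ev (fun k => J k + J' k) t = st16ev J t + st16ev J' t := by
    simp [st16ev, smul_add, Finset.sum_add_distrib]
  rw [hev]
  calc ‖f t + g t - (st16ev J t + st16ev J' t)‖
      = ‖(f t - st16ev J t) + (g t - st16ev J' t)‖ := by congr 1; abel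
    _ ≤ ‖f t - st16ev J t‖ + ‖g t - st16ev J' t‖ := norm_add_le _ _
    _ ≤ K * t ^ 5 + L * t ^ 5 := add_le_add (hb t ht) (hb' t ht)
    _ = (K + L) * t ^ 5 := by ring

lemma st16Approx.smul {f : ℝ → 𝔸} {J : ℕ → 𝔸} (c : ℂ) (hf : st16Approx f J) :
    st16Approx (fun t => c • f t) (fun k => c • J k) := by
  obtain ⟨K, hK, hb⟩ := hf
  refine ⟨‖c‖ * K, by positivity, fun t ht => ?_⟩
  have hev : st16ev (fun k => c • J k) t = c • st16ev J t := by
    simp [st16ev, Finset.smul_sum, smul_comm c]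
  rw [hev, ← smul_sub, norm_smul, mul_assoc]
  exact mul_le_mul_of_nonneg_left (hb t ht) (norm_nonneg c)

lemma st16Approx.sub {f g : ℝ → 𝔸} {J J' : ℕ → 𝔸} (hf : st16Approx f J)
    (hg : st16Approx g J') : st16Approx (fun t => f t - g t) (fun k => J k - J' k) := by
  have := hf.add (hg.smul (-1 : ℂ))
  simpa [sub_eq_add_neg] using this

lemma st16Approx.const (M : 𝔸) :
    st16Approx (fun _ => M) (fun k => if k = 0 then M else 0) := by
  refine ⟨0, le_refl _, fun t ht => ?_⟩
  have : st16ev (fun k => if k = 0 then M else (0:𝔸)) t = M := by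
    simp [st16ev, Finset.sum_range_succ]
  simp [this]

lemma st16ev_mul_sub (J J' : ℕ → 𝔸) (t : ℝ) :
    st16ev J t * st16ev J' t - st16ev (st16conv J J') t
      = ∑ p ∈ (Finset.range 5 ×ˢ Finset.range 5).filter (fun p => 5 ≤ p.1 + p.2),
          ((t : ℂ)) ^ (p.1 + p.2) • (J p.1 * J' p.2) := by
  simp only [st16ev, st16conv, Finset.sum_filter, Finset.sum_product,
    Finset.sum_range_succ, Finset.sum_range_zero, smul_mul_assoc, mul_smul_comm,
    smul_smul, mul_add, add_mul]
  norm_num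
  match_scalars <;> (try simp only [Complex.coe_algebraMap]) <;> ring

lemma st16Approx.mul {f g : ℝ → 𝔸} {J J' : ℕ → 𝔸} (hf : st16Approx f J)
    (hg : st16Approx g J') :
    st16Approx (fun t => f t * g t) (st16conv J J') := by
  obtain ⟨Kg, hKg, hgb⟩ := hg.norm_le
  obtain ⟨K, hK, hb⟩ := hf
  obtain ⟨L, hL, hb'⟩ := hg
  set S := (Finset.range 5 ×ˢ Finset.range 5).filter (fun p : ℕ × ℕ => 5 ≤ p.1 + p.2)
  set KJ := ∑ k ∈ Finset.range 5, ‖J k‖ with hKJ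
  have hKJ0 : 0 ≤ KJ := Finset.sum_nonneg fun _ _ => norm_nonneg _
  set K3 := ∑ p ∈ S, ‖J p.1‖ * ‖J' p.2‖ with hK3
  have hK30 : 0 ≤ K3 := Finset.sum_nonneg fun _ _ => by positivity
  refine ⟨K * Kg + KJ * L + K3, by positivity, fun t ht => ?_⟩
  have key : f t * g t - st16ev (st16conv J J') t
      = (f t - st16ev J t) * g t + st16ev J t * (g t - st16ev J' t)
        + (st16ev J t * st16ev J' t - st16ev (st16conv J J') t) := by
    simp only [sub_mul, mul_sub]
    abel
  rw [key]
  have h1 : ‖(f t - st16ev J t) * g t‖ ≤ (K * t ^ 5) * Kg := by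
    calc ‖(f t - st16ev J t) * g t‖ ≤ ‖f t - st16ev J t‖ * ‖g t‖ := norm_mul_le _ _
      _ ≤ (K * t ^ 5) * Kg := by
          exact mul_le_mul (hb t ht) (hgb t ht) (norm_nonneg _)
            (mul_nonneg hK (pow_nonneg ht.1 5))
  have h2 : ‖st16ev J t * (g t - st16ev J' t)‖ ≤ KJ * (L * t ^ 5) := by
    calc ‖st16ev J t * (g t - st16ev J' t)‖ ≤ ‖st16ev J t‖ * ‖g t - st16ev J' t‖ :=
        norm_mul_le _ _
      _ ≤ KJ * (L * t ^ 5) := by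
          apply mul_le_mul (st16ev_norm_le J ht) (hb' t ht) (norm_nonneg _) hKJ0
  have h3 : ‖st16ev J t * st16ev J' t - st16ev (st16conv J J') t‖ ≤ K3 * t ^ 5 := by
    rw [st16ev_mul_sub, hK3, Finset.sum_mul]
    refine (norm_sum_le _ _).trans (Finset.sum_le_sum fun p hp => ?_)
    have hp5 : 5 ≤ p.1 + p.2 := (Finset.mem_filter.mp hp).2
    rw [norm_smul, norm_pow, Complex.norm_real, Real.norm_eq_abs, abs_of_nonneg ht.1]
    calc t ^ (p.1 + p.2) * ‖J p.1 * J' p.2‖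
        ≤ t ^ 5 * (‖J p.1‖ * ‖J' p.2‖) := by
          exact mul_le_mul (st16_tpow_le ht hp5) (norm_mul_le _ _) (norm_nonneg _)
            (pow_nonneg ht.1 5)
      _ = ‖J p.1‖ * ‖J' p.2‖ * t ^ 5 := by ring
  calc ‖_ + _ + _‖ ≤ ‖(f t - st16ev J t) * g t‖ + ‖st16ev J t * (g t - st16ev J' t)‖
        + ‖st16ev J t * st16ev J' t - st16ev (st16conv J J') t‖ := norm_add₃_le
    _ ≤ (K * t ^ 5) * Kg + KJ * (L * t ^ 5) + K3 * t ^ 5 := by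
        exact add_le_add (add_le_add h1 h2) h3
    _ = (K * Kg + KJ * L + K3) * t ^ 5 := by ring

lemma st16Approx.exp (M : 𝔸) :
    st16Approx (fun t => NormedSpace.exp ((t : ℂ) • M))
      (fun k => ((k.factorial : ℂ))⁻¹ • M ^ k) := by
  refine ⟨‖M‖ ^ 5 * Real.exp ‖M‖, by positivity, fun t ht => ?_⟩
  have hev : st16ev (fun k => ((k.factorial : ℂ))⁻¹ • M ^ k) t
      = ∑ k ∈ Finset.range 5, ((k.factorial : ℂ))⁻¹ • ((t : ℂ) • M) ^ k := by
    unfold st16ev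
    refine Finset.sum_congr rfl fun k _ => ?_
    rw [smul_pow, smul_smul, smul_smul, mul_comm]
  rw [hev]
  refine (st16_exp_remainder ((t : ℂ) • M)).trans ?_
  rw [norm_smul, Complex.norm_real, Real.norm_eq_abs, abs_of_nonneg ht.1]
  rw [mul_pow]
  calc (t ^ 5 * ‖M‖ ^ 5) * Real.exp (t * ‖M‖)
      ≤ (t ^ 5 * ‖M‖ ^ 5) * Real.exp ‖M‖ := by
        apply mul_le_mul_of_nonneg_left _ (mul_nonneg (pow_nonneg ht.1 5) (by positivity))
        apply Real.exp_le_exp.2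
        calc t * ‖M‖ ≤ 1 * ‖M‖ := mul_le_mul_of_nonneg_right ht.2 (norm_nonneg _)
          _ = ‖M‖ := one_mul _
    _ = ‖M‖ ^ 5 * Real.exp ‖M‖ * t ^ 5 := by ring


noncomputable def st16E {𝔸 : Type*} [NormedRing 𝔸] [NormedAlgebra ℂ 𝔸] (c : ℂ) (X : 𝔸) : ℕ → 𝔸 :=
  fun k => ((k.factorial : ℂ))⁻¹ • (c • X) ^ k

noncomputable def st16cst {𝔸 : Type*} [NormedRing 𝔸] [NormedAlgebra ℂ 𝔸] (M : 𝔸) : ℕ → 𝔸 :=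
  fun k => if k = 0 then M else 0

noncomputable def st16JI {𝔸 : Type*} [NormedRing 𝔸] [NormedAlgebra ℂ 𝔸] (A B : 𝔸) : ℕ → 𝔸 :=
  fun k => st16conv (st16conv (st16E (-(Complex.I/2)) A) (st16cst B)) (st16E (Complex.I/2) A) k
    - st16cst B k

noncomputable def st16JM {𝔸 : Type*} [NormedRing 𝔸] [NormedAlgebra ℂ 𝔸] (A B : 𝔸) : ℕ → 𝔸 :=
  fun k => (1/2 : ℂ) • (st16conv (st16conv (st16E (-Complex.I) B) (st16cst A)) (st16E Complex.I B) k
      - st16cst A k)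
    + st16conv (st16conv (st16E (-Complex.I) B) (st16JI A B)) (st16E Complex.I B) k

noncomputable def st16JF {𝔸 : Type*} [NormedRing 𝔸] [NormedAlgebra ℂ 𝔸] (A B : 𝔸) : ℕ → 𝔸 :=
  st16conv (st16conv (st16E (-(Complex.I/2)) A) (st16JM A B)) (st16E (Complex.I/2) A)

section JetValues
variable {𝔸 : Type*} [NormedRing 𝔸] [NormedAlgebra ℂ 𝔸] (A B : 𝔸)

lemma st16JI_zero : st16JI A B 0 = 0 := by
  simp only [st16JI, st16conv, st16E, st16cst, Finset.sum_range_succ, Finset.sum_range_zero,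
    Nat.factorial]
  norm_num [smul_pow, smul_smul, smul_mul_assoc, mul_smul_comm, mul_add, add_mul,
    mul_sub, sub_mul, smul_add, smul_sub, mul_assoc, pow_succ, mul_ite, ite_mul]
  all_goals match_scalars <;> (try simp [Complex.ext_iff]) <;> (try norm_num)

lemma st16JI_one : st16JI A B 1 = ((-1/2 : ℂ) * Complex.I) • (A * B) + ((1/2 : ℂ) * Complex.I) • (B * A) := by
  simp only [st16JI, st16conv, st16E, st16cst, Finset.sum_range_succ, Finset.sum_range_zero,
    Nat.factorial]
  norm_num [smul_pow, smul_smul, smul_mul_assoc, mul_smul_comm, mul_add, add_mul,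
    mul_sub, sub_mul, smul_add, smul_sub, mul_assoc, pow_succ, mul_ite, ite_mul]
  all_goals match_scalars <;> (try simp [Complex.ext_iff]) <;> (try norm_num)

lemma st16JI_two : st16JI A B 2 = (-1/8 : ℂ) • (A * A * B) + (1/4 : ℂ) • (A * B * A) + (-1/8 : ℂ) • (B * A * A) := by
  simp only [st16JI, st16conv, st16E, st16cst, Finset.sum_range_succ, Finset.sum_range_zero,
    Nat.factorial]
  norm_num [smul_pow, smul_smul, smul_mul_assoc, mul_smul_comm, mul_add, add_mul,
    mul_sub, sub_mul, smul_add, smul_sub, mul_assoc, pow_succ, mul_ite, ite_mul]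
  all_goals match_scalars <;> (try simp [Complex.ext_iff]) <;> (try norm_num)

lemma st16JI_three : st16JI A B 3 = ((1/48 : ℂ) * Complex.I) • (A * A * A * B) + ((-1/16 : ℂ) * Complex.I) • (A * A * B * A) + ((1/16 : ℂ) * Complex.I) • (A * B * A * A) + ((-1/48 : ℂ) * Complex.I) • (B * A * A * A) := by
  simp only [st16JI, st16conv, st16E, st16cst, Finset.sum_range_succ, Finset.sum_range_zero,
    Nat.factorial]
  norm_num [smul_pow, smul_smul, smul_mul_assoc, mul_smul_comm, mul_add, add_mul,
    mul_sub, sub_mul, smul_add, smul_sub, mul_assoc, pow_succ, mul_ite, ite_mul]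
  all_goals match_scalars <;> (try simp [Complex.ext_iff]) <;> (try norm_num)

lemma st16JI_four : st16JI A B 4 = (1/384 : ℂ) • (A * A * A * A * B) + (-1/96 : ℂ) • (A * A * A * B * A) + (1/64 : ℂ) • (A * A * B * A * A) + (-1/96 : ℂ) • (A * B * A * A * A) + (1/384 : ℂ) • (B * A * A * A * A) := by
  simp only [st16JI, st16conv, st16E, st16cst, Finset.sum_range_succ, Finset.sum_range_zero,
    Nat.factorial]
  norm_num [smul_pow, smul_smul, smul_mul_assoc, mul_smul_comm, mul_add, add_mul,
    mul_sub, sub_mul, smul_add, smul_sub, mul_assoc, pow_succ, mul_ite, ite_mul]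
  all_goals match_scalars <;> (try simp [Complex.ext_iff]) <;> (try norm_num)

lemma st16JM_zero : st16JM A B 0 = 0 := by
  simp only [st16JM, st16conv, st16E, st16cst, Finset.sum_range_succ, Finset.sum_range_zero,
    Nat.factorial]
  norm_num [smul_pow, smul_smul, smul_mul_assoc, mul_smul_comm, mul_add, add_mul,
    mul_sub, sub_mul, smul_add, smul_sub, mul_assoc, pow_succ, mul_ite, ite_mul, st16JI_zero, st16JI_one, st16JI_two, st16JI_three, st16JI_four]
  all_goals match_scalars <;> (try simp [Complex.ext_iff]) <;> (try norm_num)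

lemma st16JM_one : st16JM A B 1 = 0 := by
  simp only [st16JM, st16conv, st16E, st16cst, Finset.sum_range_succ, Finset.sum_range_zero,
    Nat.factorial]
  norm_num [smul_pow, smul_smul, smul_mul_assoc, mul_smul_comm, mul_add, add_mul,
    mul_sub, sub_mul, smul_add, smul_sub, mul_assoc, pow_succ, mul_ite, ite_mul, st16JI_zero, st16JI_one, st16JI_two, st16JI_three, st16JI_four]
  all_goals match_scalars <;> (try simp [Complex.ext_iff]) <;> (try norm_num)

lemma st16JM_two : st16JM A B 2 = (-1/8 : ℂ) • (A * A * B) + (1/4 : ℂ) • (A * B * A) + (1/4 : ℂ) • (A * B * B) + (-1/8 : ℂ) • (B * A * A) + (-1/2 : ℂ) • (B * A * B) + (1/4 : ℂ) • (B * B * A) := by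
  simp only [st16JM, st16conv, st16E, st16cst, Finset.sum_range_succ, Finset.sum_range_zero,
    Nat.factorial]
  norm_num [smul_pow, smul_smul, smul_mul_assoc, mul_smul_comm, mul_add, add_mul,
    mul_sub, sub_mul, smul_add, smul_sub, mul_assoc, pow_succ, mul_ite, ite_mul, st16JI_zero, st16JI_one, st16JI_two, st16JI_three, st16JI_four]
  all_goals match_scalars <;> (try simp [Complex.ext_iff]) <;> (try norm_num)

lemma st16JM_three : st16JM A B 3 = ((1/48 : ℂ) * Complex.I) • (A * A * A * B) + ((-1/16 : ℂ) * Complex.I) • (A * A * B * A) + ((-1/8 : ℂ) * Complex.I) • (A * A * B * B) + ((1/16 : ℂ) * Complex.I) • (A * B * A * A) + ((1/4 : ℂ) * Complex.I) • (A * B * A * B) + ((1/6 : ℂ) * Complex.I) • (A * B * B * B) + ((-1/48 : ℂ) * Complex.I) • (B * A * A * A) + ((-1/4 : ℂ) * Complex.I) • (B * A * B * A) + ((-1/2 : ℂ) * Complex.I) • (B * A * B * B) + ((1/8 : ℂ) * Complex.I) • (B * B * A * A) + ((1/2 : ℂ) * Complex.I) • (B * B * A * B) + ((-1/6 : ℂ)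 * Complex.I) • (B * B * B * A) := by
  simp only [st16JM, st16conv, st16E, st16cst, Finset.sum_range_succ, Finset.sum_range_zero,
    Nat.factorial]
  norm_num [smul_pow, smul_smul, smul_mul_assoc, mul_smul_comm, mul_add, add_mul,
    mul_sub, sub_mul, smul_add, smul_sub, mul_assoc, pow_succ, mul_ite, ite_mul, st16JI_zero, st16JI_one, st16JI_two, st16JI_three, st16JI_four]
  all_goals match_scalars <;> (try simp [Complex.ext_iff]) <;> (try norm_num)

lemma st16JM_four : st16JM A B 4 = (1/384 : ℂ) • (A * A * A * A * B) + (-1/96 : ℂ) • (A * A * A * B * A) + (-1/48 : ℂ) • (A * A * A * B * B) + (1/64 : ℂ) • (A * A * B * A * A) + (1/16 : ℂ) • (A * A * B * A * B) + (1/16 : ℂ) • (A * A * B * B * B) + (-1/96 : ℂ) • (A * B * A * A * A) + (-1/16 : ℂ) • (A * B * A * A * B) + (-1/8 : ℂ) • (A * B * A * B * B) + (-1/16 : ℂ) • (A * B * B * B * B) + (1/384 : ℂ) • (B * A * A * A * A) + (1/24 : ℂ) • (B * A * A * A * B) + (-1/16 : ℂ) • (B * A * A * B * A) + (-1/16 :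 ℂ) • (B * A * A * B * B) + (1/16 : ℂ) • (B * A * B * A * A) + (1/4 : ℂ) • (B * A * B * A * B) + (1/4 : ℂ) • (B * A * B * B * B) + (-1/48 : ℂ) • (B * B * A * A * A) + (-1/16 : ℂ) • (B * B * A * A * B) + (-1/8 : ℂ) • (B * B * A * B * A) + (-3/8 : ℂ) • (B * B * A * B * B) + (1/16 : ℂ) • (B * B * B * A * A) + (1/4 : ℂ) • (B * B * B * A * B) + (-1/16 : ℂ) • (B * B * B * B * A) := by
  simp only [st16JM, st16conv, st16E, st16cst, Finset.sum_range_succ, Finset.sum_range_zero,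
    Nat.factorial]
  norm_num [smul_pow, smul_smul, smul_mul_assoc, mul_smul_comm, mul_add, add_mul,
    mul_sub, sub_mul, smul_add, smul_sub, mul_assoc, pow_succ, mul_ite, ite_mul, st16JI_zero, st16JI_one, st16JI_two, st16JI_three, st16JI_four]
  all_goals match_scalars <;> (try simp [Complex.ext_iff]) <;> (try norm_num)

end JetValues

section JF
variable {n : ℕ} (A B : Matrix (Fin n) (Fin n) ℂ)

lemma st16JF_zero : st16JF A B 0 = 0 := by
  simp only [st16JF, st16conv, st16E, st16cst, Finset.sum_range_succ, Finset.sum_range_zero,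
    Nat.factorial]
  norm_num [smul_pow, smul_smul, smul_mul_assoc, mul_smul_comm, mul_add, add_mul,
    mul_sub, sub_mul, smul_add, smul_sub, mul_assoc, pow_succ, mul_ite, ite_mul, st16JM_zero, st16JM_one, st16JM_two, st16JM_three, st16JM_four, ad, Function.iterate_succ, Function.iterate_zero, Function.comp_apply, id_eq, two_nsmul, two_mul]
  all_goals match_scalars <;> (try simp [Complex.ext_iff]) <;> (try norm_num)

lemma st16JF_one : st16JF A B 1 = 0 := by
  simp only [st16JF, st16conv, st16E, st16cst, Finset.sum_range_succ, Finset.sum_range_zero,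
    Nat.factorial]
  norm_num [smul_pow, smul_smul, smul_mul_assoc, mul_smul_comm, mul_add, add_mul,
    mul_sub, sub_mul, smul_add, smul_sub, mul_assoc, pow_succ, mul_ite, ite_mul, st16JM_zero, st16JM_one, st16JM_two, st16JM_three, st16JM_four, ad, Function.iterate_succ, Function.iterate_zero, Function.comp_apply, id_eq, two_nsmul, two_mul]
  all_goals match_scalars <;> (try simp [Complex.ext_iff]) <;> (try norm_num)

lemma st16JF_two : st16JF A B 2 = (-(1 / 8) : ℂ) • ((ad A)^[2] B - 2 • (ad B)^[2] A) := by
  simp only [st16JF, st16conv, st16E, st16cst, Finset.sum_range_succ, Finset.sum_range_zero,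
    Nat.factorial]
  norm_num [smul_pow, smul_smul, smul_mul_assoc, mul_smul_comm, mul_add, add_mul,
    mul_sub, sub_mul, smul_add, smul_sub, mul_assoc, pow_succ, mul_ite, ite_mul, st16JM_zero, st16JM_one, st16JM_two, st16JM_three, st16JM_four, ad, Function.iterate_succ, Function.iterate_zero, Function.comp_apply, id_eq, two_nsmul, two_mul]
  all_goals match_scalars <;> (try simp [Complex.ext_iff]) <;> (try norm_num)

lemma st16JF_three : st16JF A B 3 = (Complex.I / 12) •
      ((ad A)^[3] B + (3 / 2 : ℂ) • ad B ((ad A)^[2] B) - 2 • (ad B)^[3] A -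
        (3 / 2 : ℂ) • ad A ((ad B)^[2] A)) := by
  simp only [st16JF, st16conv, st16E, st16cst, Finset.sum_range_succ, Finset.sum_range_zero,
    Nat.factorial]
  norm_num [smul_pow, smul_smul, smul_mul_assoc, mul_smul_comm, mul_add, add_mul,
    mul_sub, sub_mul, smul_add, smul_sub, mul_assoc, pow_succ, mul_ite, ite_mul, st16JM_zero, st16JM_one, st16JM_two, st16JM_three, st16JM_four, ad, Function.iterate_succ, Function.iterate_zero, Function.comp_apply, id_eq, two_nsmul, two_mul]
  all_goals match_scalars <;> (try simp [Complex.ext_iff]) <;> (try norm_num)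

lemma st16JF_four : st16JF A B 4 = (1 / 16 : ℂ) •
      ((11 / 24 : ℂ) • (ad A)^[4] B - (ad B)^[4] A -
        (4 / 3 : ℂ) • ad A ((ad B)^[3] A) -
        (1 / 2 : ℂ) • (ad A)^[2] ((ad B)^[2] A) +
        (ad B)^[2] ((ad A)^[2] B) +
        (1 / 3 : ℂ) • ad B ((ad A)^[3] B) +
        ad A (ad B ((ad A)^[2] B))) := by
  simp only [st16JF, st16conv, st16E, st16cst, Finset.sum_range_succ, Finset.sum_range_zero,
    Nat.factorial]
  norm_num [smul_pow, smul_smul, smul_mul_assoc, mul_smul_comm, mul_add, add_mul,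
    mul_sub, sub_mul, smul_add, smul_sub, mul_assoc, pow_succ, mul_ite, ite_mul, st16JM_zero, st16JM_one, st16JM_two, st16JM_three, st16JM_four, ad, Function.iterate_succ, Function.iterate_zero, Function.comp_apply, id_eq, two_nsmul, two_mul]
  all_goals match_scalars <;> (try simp [Complex.ext_iff]) <;> (try norm_num)

end JF


lemma st16Approx.congr {𝔸 : Type*} [NormedRing 𝔸] [NormedAlgebra ℂ 𝔸] [CompleteSpace 𝔸]
    {f g : ℝ → 𝔸} {J : ℕ → 𝔸} (h : ∀ t, f t = g t) (hf : st16Approx f J) :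
    st16Approx g J := by
  obtain ⟨K, hK, hb⟩ := hf
  exact ⟨K, hK, fun t ht => by rw [← h t]; exact hb t ht⟩

/-- the expansion `A₂(t) = t²Ω₂ + t³Ω₃ + t⁴Ω₄ + O(t⁵)`. -/
theorem stmt16 {n : ℕ} (A B : Matrix (Fin n) (Fin n) ℂ)
    (Ω₂ Ω₃ Ω₄ : Matrix (Fin n) (Fin n) ℂ)
    (hΩ₂ : Ω₂ = (-(1 / 8) : ℂ) • ((ad A)^[2] B - 2 • (ad B)^[2] A))
    (hΩ₃ : Ω₃ = (Complex.I / 12) •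
      ((ad A)^[3] B + (3 / 2 : ℂ) • ad B ((ad A)^[2] B) - 2 • (ad B)^[3] A -
        (3 / 2 : ℂ) • ad A ((ad B)^[2] A)))
    (hΩ₄ : Ω₄ = (1 / 16 : ℂ) •
      ((11 / 24 : ℂ) • (ad A)^[4] B - (ad B)^[4] A -
        (4 / 3 : ℂ) • ad A ((ad B)^[3] A) -
        (1 / 2 : ℂ) • (ad A)^[2] ((ad B)^[2] A) +
        (ad B)^[2] ((ad A)^[2] B) +
        (1 / 3 : ℂ) • ad B ((ad A)^[3] B) +
        ad A (ad B ((ad A)^[2] B)))) :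
    ∃ C : ℝ, 0 ≤ C ∧ ∀ t ∈ Set.Icc (0:ℝ) 1,
      ‖A2 A B t - (t : ℂ) ^ 2 • Ω₂ - (t : ℂ) ^ 3 • Ω₃ - (t : ℂ) ^ 4 • Ω₄‖
        ≤ C * t ^ 5 := by
  have hE1 : st16Approx (fun t : ℝ => NormedSpace.exp ((t : ℂ) • ((-(Complex.I/2)) • A)))
      (st16E (-(Complex.I/2)) A) := st16Approx.exp _
  have hE4 : st16Approx (fun t : ℝ => NormedSpace.exp ((t : ℂ) • ((Complex.I/2) • A)))
      (st16E (Complex.I/2) A) := st16Approx.exp _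
  have hE2 : st16Approx (fun t : ℝ => NormedSpace.exp ((t : ℂ) • ((-Complex.I) • B)))
      (st16E (-Complex.I) B) := st16Approx.exp _
  have hE3 : st16Approx (fun t : ℝ => NormedSpace.exp ((t : ℂ) • (Complex.I • B)))
      (st16E Complex.I B) := st16Approx.exp _
  have hcA : st16Approx (fun _ : ℝ => A) (st16cst A) := st16Approx.const A
  have hcB : st16Approx (fun _ : ℝ => B) (st16cst B) := st16Approx.const B
  have hinner : st16Approx
      (fun t : ℝ => NormedSpace.exp ((t : ℂ) • ((-(Complex.I/2)) • A)) * B *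
        NormedSpace.exp ((t : ℂ) • ((Complex.I/2) • A)) - B) (st16JI A B) :=
    ((hE1.mul hcB).mul hE4).sub hcB
  have hmid1 := st16Approx.smul (1/2 : ℂ) (((hE2.mul hcA).mul hE3).sub hcA)
  have hmid := hmid1.add ((hE2.mul hinner).mul hE3)
  have hfin : st16Approx
      (fun t : ℝ => NormedSpace.exp ((t : ℂ) • ((-(Complex.I/2)) • A)) *
        ((1/2 : ℂ) • (NormedSpace.exp ((t : ℂ) • ((-Complex.I) • B)) * A *
            NormedSpace.exp ((t : ℂ) • (Complex.I • B)) - A) +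
          NormedSpace.exp ((t : ℂ) • ((-Complex.I) • B)) *
            (NormedSpace.exp ((t : ℂ) • ((-(Complex.I/2)) • A)) * B *
              NormedSpace.exp ((t : ℂ) • ((Complex.I/2) • A)) - B) *
            NormedSpace.exp ((t : ℂ) • (Complex.I • B))) *
        NormedSpace.exp ((t : ℂ) • ((Complex.I/2) • A))) (st16JF A B) :=
    (hE1.mul hmid).mul hE4
  have hA2 : st16Approx (fun t => A2 A B t) (st16JF A B) := by
    refine st16Approx.congr (fun t => ?_) hfin
    have e1 : ((t : ℂ)) • ((-(Complex.I/2)) • A) = (-(Complex.I * (t : ℂ) / 2)) • A := by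
      rw [smul_smul]; congr 1; ring
    have e4 : ((t : ℂ)) • ((Complex.I/2) • A) = (Complex.I * (t : ℂ) / 2) • A := by
      rw [smul_smul]; congr 1; ring
    have e2 : ((t : ℂ)) • ((-Complex.I) • B) = (-(Complex.I * (t : ℂ))) • B := by
      rw [smul_smul]; congr 1; ring
    have e3 : ((t : ℂ)) • (Complex.I • B) = (Complex.I * (t : ℂ)) • B := by
      rw [smul_smul]; congr 1; ring
    rw [A2, e1, e2, e3, e4]
  obtain ⟨K, hK, hb⟩ := hA2
  refine ⟨K, hK, fun t ht => ?_⟩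
  have hev : st16ev (st16JF A B) t
      = (t : ℂ) ^ 2 • Ω₂ + (t : ℂ) ^ 3 • Ω₃ + (t : ℂ) ^ 4 • Ω₄ := by
    have h0 := st16JF_zero A B
    have h1 := st16JF_one A B
    have h2 := st16JF_two A B
    have h3 := st16JF_three A B
    have h4 := st16JF_four A B
    rw [st16ev]
    rw [Finset.sum_range_succ, Finset.sum_range_succ, Finset.sum_range_succ,
      Finset.sum_range_succ, Finset.sum_range_succ, Finset.sum_range_zero]
    rw [h0, h1, h2, h3, h4, ← hΩ₂, ← hΩ₃, ← hΩ₄]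
    simp
  have hbt := hb t ht
  rw [hev] at hbt
  have e : A2 A B t - (t : ℂ) ^ 2 • Ω₂ - (t : ℂ) ^ 3 • Ω₃ - (t : ℂ) ^ 4 • Ω₄
      = A2 A B t - ((t : ℂ) ^ 2 • Ω₂ + (t : ℂ) ^ 3 • Ω₃ + (t : ℂ) ^ 4 • Ω₄) := by abel
  rw [e]
  exact hbt
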